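/- arXiv:1009.2277 — 2 statements merged into one kernel-verified Lean document; each statement's English description precedes it below -/
import Mathlib

section
/- Let X be a compact metric space and f : X → X a multi-transitive continuous map. Then for any m ≥ 1 and nonempty open sets V₁, …, V_m ⊆ X there exists a sequence of integers (k_n)_{n=0}^∞ with k_n − n > 0 for each n ≥ 0, and for each i = 1, …, m a sequence (V_i^{(n)})_{n=0}^∞ of nonempty open subsets of V_i, such that f^{i·k_j − j}(V_i^{(n)}) ⊆ V_i for all i = 1, …, m and all 0 ≤ j ≤ n. -/
open Set Function

/-- A continuous self-map is topologically transitive if every pair of nonempty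
open sets is connected by some positive iterate. -/
def TopTransitive {X : Type*} [TopologicalSpace X] (f : X → X) : Prop :=
  ∀ U V : Set X, IsOpen U → IsOpen V → U.Nonempty → V.Nonempty →
    ∃ n : ℕ, 0 < n ∧ (f^[n] '' U ∩ V).Nonempty

/-- The map `f^{(∗m)} = f × f² × ⋯ × f^m` acting on `X^m` (coordinates indexed by `Fin m`,
where coordinate `i` is moved by `f^[i+1]`). -/
def starMap {X : Type*} (f : X → X) (m : ℕ) : (Fin m → X) → (Fin m → X) :=
  fun x i => f^[(i : ℕ) + 1] (x i)

/-- `f` is weakly mixing if `f × f` is topologically transitive. -/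
def WeaklyMixing {X : Type*} [TopologicalSpace X] (f : X → X) : Prop :=
  TopTransitive (fun p : X × X => (f p.1, f p.2))

/-- `f` is multi-transitive if `f × f² × ⋯ × f^m` is topologically transitive
for every `m ≥ 1`. -/
def MultiTransitive {X : Type*} [TopologicalSpace X] (f : X → X) : Prop :=
  ∀ m : ℕ, 1 ≤ m → TopTransitive (starMap f m)

/-- `f` is Δ-transitive if for each `m ≥ 1` there is a residual set `Y ⊆ X` such that
for every `x ∈ Y` the diagonal tuple `(x, …, x)` has dense orbit under `f × f² × ⋯ × f^m`. -/
def DeltaTransitive {X : Type*} [TopologicalSpace X] (f : X → X) : Prop :=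
  ∀ m : ℕ, 1 ≤ m → ∃ Y : Set X, Y ∈ residual X ∧
    ∀ x ∈ Y, Dense (Set.range fun n : ℕ => (starMap f m)^[n] (fun _ : Fin m => x))

/-- A set `S ⊆ ℕ` is syndetic if there is `L > 0` with `[n, n+L] ∩ S ≠ ∅` for every `n`. -/
def Syndetic (S : Set ℕ) : Prop :=
  ∃ L : ℕ, 0 < L ∧ ∀ n : ℕ, ∃ k ∈ S, n ≤ k ∧ k ≤ n + L

/-- `N(U,V;f) = {n > 0 : f^n(U) ∩ V ≠ ∅}`. -/
def NSet {X : Type*} (f : X → X) (U V : Set X) : Set ℕ :=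
  {n | 0 < n ∧ (f^[n] '' U ∩ V).Nonempty}

/-- `f` is syndetically transitive if `N(U,V;f)` is syndetic for all nonempty open `U, V`. -/
def SyndeticallyTransitive {X : Type*} [TopologicalSpace X] (f : X → X) : Prop :=
  ∀ U V : Set X, IsOpen U → IsOpen V → U.Nonempty → V.Nonempty → Syndetic (NSet f U V)

/-- `f` is strongly transitive if for every nonempty open `U` there is `M > 0` with
`⋃_{j=1}^M f^j(U) = X`. -/
def StronglyTransitive {X : Type*} [TopologicalSpace X] (f : X → X) : Prop :=
  ∀ U : Set X, IsOpen U → U.Nonempty →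
    ∃ M : ℕ, 0 < M ∧ (⋃ j ∈ Finset.Icc 1 M, f^[j] '' U) = Set.univ

/-- `f` is minimal if the only nonempty closed `f`-invariant subset is the whole space. -/
def MinimalMap {X : Type*} [TopologicalSpace X] (f : X → X) : Prop :=
  ∀ K : Set X, IsClosed K → K.Nonempty → f '' K ⊆ K → K = Set.univ

lemma starMap_iterate {X : Type*} (f : X → X) (m t : ℕ) (x : Fin m → X) (i : Fin m) :
    (starMap f m)^[t] x i = f^[((i : ℕ) + 1) * t] (x i) := by
  induction t generalizing x with
  | zero => simp
  | succ t ih =>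
    rw [Function.iterate_succ_apply, ih, Nat.mul_succ, Function.iterate_add_apply]
    rfl

lemma surjective_of_multiTransitive {X : Type*} [MetricSpace X] [CompactSpace X]
    (f : X → X) (hf : Continuous f) (hmt : MultiTransitive f) : Function.Surjective f := by
  have ht := hmt 1 le_rfl
  rw [← Set.range_eq_univ]
  have hclosed : IsClosed (Set.range f) := (isCompact_range hf).isClosed
  have hdense : Dense (Set.range f) := by
    rw [dense_iff_inter_open]
    intro U hU hUne
    obtain ⟨v, hv⟩ := hUne
    obtain ⟨n, hn, w, hw⟩ := ht Set.univ {g | g 0 ∈ U} isOpen_univ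
      (hU.preimage (continuous_apply 0)) ⟨fun _ => v, trivial⟩ ⟨fun _ => v, hv⟩
    obtain ⟨⟨z, _, hz⟩, hwU⟩ := hw
    refine ⟨w 0, hwU, ?_⟩
    obtain ⟨n, rfl⟩ := Nat.exists_eq_succ_of_ne_zero hn.ne'
    rw [← hz, starMap_iterate]
    simp only [Fin.val_zero, zero_add, one_mul, Function.iterate_succ_apply']
    exact ⟨_, rfl⟩
  rw [← hclosed.closure_eq]
  exact hdense.closure_eq

/-- If `f` is multi-transitive, then for any `m ≥ 1` and nonempty open
`V₁, …, V_m` there are integers `(k_n)` with `k_n - n > 0` and, for each `i`, nonempty open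
subsets `V_i⁽ⁿ⁾ ⊆ V_i` with `f^{i·k_j - j}(V_i⁽ⁿ⁾) ⊆ V_i` for all `0 ≤ j ≤ n`. -/
theorem statement2 {X : Type*} [MetricSpace X] [CompactSpace X] (f : X → X)
    (hf : Continuous f) (hmt : MultiTransitive f) :
    ∀ m : ℕ, 1 ≤ m → ∀ V : Fin m → Set X, (∀ i, IsOpen (V i)) → (∀ i, (V i).Nonempty) →
      ∃ (k : ℕ → ℕ) (W : Fin m → ℕ → Set X),
        (∀ n : ℕ, n < k n) ∧
        (∀ i n, IsOpen (W i n) ∧ (W i n).Nonempty ∧ W i n ⊆ V i) ∧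
        (∀ (i : Fin m) (n j : ℕ), j ≤ n →
          f^[((i : ℕ) + 1) * k j - j] '' W i n ⊆ V i) := by
  intro m hm V hVo hVne
  have hsurj : Function.Surjective f := surjective_of_multiTransitive f hf hmt
  have hiter : ∀ r : ℕ, Function.Surjective f^[r] := fun r => hsurj.iterate r
  -- Key step: given nonempty open subsets `Wp i ⊆ V i`, find `k > n` and nonempty open
  -- `W' i ⊆ Wp i` with `f^[(i+1)k - n] '' W' i ⊆ V i`.
  have key : ∀ (n : ℕ) (Wp : Fin m → Set X),
      (∀ i, IsOpen (Wp i) ∧ (Wp i).Nonempty ∧ Wp i ⊆ V i) →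
      ∃ p : ℕ × (Fin m → Set X), n < p.1 ∧
        (∀ i, IsOpen (p.2 i) ∧ (p.2 i).Nonempty ∧ p.2 i ⊆ Wp i) ∧
        ∀ i : Fin m, f^[((i : ℕ) + 1) * p.1 - n] '' p.2 i ⊆ V i := by
    intro n Wp hWp
    set B : Fin m → Set X := fun i => f^[(i : ℕ) * n] ⁻¹' (V i) with hB
    have hBo : ∀ i, IsOpen (B i) := fun i => (hVo i).preimage (hf.iterate _)
    have hBne : ∀ i, (B i).Nonempty := by
      intro i
      obtain ⟨v, hv⟩ := hVne i
      obtain ⟨x, hx⟩ := hiter ((i : ℕ) * n) v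
      exact ⟨x, by simp only [hB, Set.mem_preimage, hx]; exact hv⟩
    obtain ⟨t, ht, w, hw⟩ := hmt m hm (Set.pi Set.univ Wp) (Set.pi Set.univ B)
      (isOpen_set_pi Set.finite_univ (fun i _ => (hWp i).1))
      (isOpen_set_pi Set.finite_univ (fun i _ => hBo i))
      ⟨fun i => (hWp i).2.1.choose, fun i _ => (hWp i).2.1.choose_spec⟩
      ⟨fun i => (hBne i).choose, fun i _ => (hBne i).choose_spec⟩
    obtain ⟨⟨y, hyU, hyw⟩, hwB⟩ := hw
    refine ⟨(t + n, fun i => Wp i ∩ f^[(i : ℕ) * n + ((i : ℕ) + 1) * t] ⁻¹' (V i)),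
      by omega, fun i => ⟨?_, ⟨y i, ?_, ?_⟩, Set.inter_subset_left⟩, ?_⟩
    · exact ((hWp i).1).inter ((hVo i).preimage (hf.iterate _))
    · exact hyU i trivial
    · show f^[(i : ℕ) * n + ((i : ℕ) + 1) * t] (y i) ∈ V i
      rw [Function.iterate_add_apply, ← starMap_iterate, hyw]
      exact hwB i trivial
    · intro i
      have he : ((i : ℕ) + 1) * (t + n) = (i : ℕ) * n + ((i : ℕ) + 1) * t + n := by ring
      rw [show ((i : ℕ) + 1) * (t + n) - n = (i : ℕ) * n + ((i : ℕ) + 1) * t from by omega]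
      rintro x ⟨z, ⟨_, hz2⟩, rfl⟩
      exact hz2
  -- Bundle the invariant into a subtype and iterate using choice.
  have key' : ∀ (n : ℕ)
      (Wp : {W : Fin m → Set X // ∀ i, IsOpen (W i) ∧ (W i).Nonempty ∧ W i ⊆ V i}),
      ∃ p : ℕ × {W : Fin m → Set X // ∀ i, IsOpen (W i) ∧ (W i).Nonempty ∧ W i ⊆ V i},
        n < p.1 ∧ (∀ i, p.2.1 i ⊆ Wp.1 i) ∧
        ∀ i : Fin m, f^[((i : ℕ) + 1) * p.1 - n] '' p.2.1 i ⊆ V i := by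
    intro n Wp
    obtain ⟨p, h1, h2, h3⟩ := key n Wp.1 Wp.2
    exact ⟨(p.1, ⟨p.2, fun i => ⟨(h2 i).1, (h2 i).2.1, (h2 i).2.2.trans (Wp.2 i).2.2⟩⟩),
      h1, fun i => (h2 i).2.2, h3⟩
  choose g hg1 hg2 hg3 using key'
  let V0 : {W : Fin m → Set X // ∀ i, IsOpen (W i) ∧ (W i).Nonempty ∧ W i ⊆ V i} :=
    ⟨V, fun i => ⟨hVo i, hVne i, subset_rfl⟩⟩
  let seq : ℕ → ℕ × {W : Fin m → Set X // ∀ i, IsOpen (W i) ∧ (W i).Nonempty ∧ W i ⊆ V i} :=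
    fun n => Nat.rec (g 0 V0) (fun n p => g (n + 1) p.2) n
  have hseq0 : seq 0 = g 0 V0 := rfl
  have hseqS : ∀ n, seq (n + 1) = g (n + 1) (seq n).2 := fun n => rfl
  have hk : ∀ n, n < (seq n).1 := by
    intro n
    cases n with
    | zero => exact hg1 0 V0
    | succ n => rw [hseqS]; exact hg1 (n + 1) (seq n).2
  have hmono : ∀ j n, j ≤ n → ∀ i, (seq n).2.1 i ⊆ (seq j).2.1 i := by
    intro j n h i
    induction n with
    | zero => cases Nat.le_zero.mp h; exact subset_rfl
    | succ n ih =>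
      rcases Nat.lt_or_ge j (n + 1) with h' | h'
      · refine subset_trans ?_ (ih (Nat.lt_succ_iff.mp h'))
        rw [hseqS]
        exact hg2 (n + 1) (seq n).2 i
      · have : j = n + 1 := le_antisymm h h'
        subst this; exact subset_rfl
  have himg : ∀ (i : Fin m) (j : ℕ), f^[((i : ℕ) + 1) * (seq j).1 - j] '' (seq j).2.1 i ⊆ V i := by
    intro i j
    cases j with
    | zero => exact hg3 0 V0 i
    | succ j => rw [hseqS]; exact hg3 (j + 1) (seq j).2 i
  refine ⟨fun n => (seq n).1, fun i n => (seq n).2.1 i, hk, fun i n => (seq n).2.2 i, ?_⟩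
  intro i n j hj
  exact (Set.image_mono (hmono j n hj i)).trans (himg i j)
end

section
/- For any P ⊆ ℕ, the spacing shift σ_P : Σ_P → Σ_P is weakly mixing if and only if P is a thick set. -/
open Set Function

/-- The spacing shift `Σ_P ⊆ {0,1}^ℕ`: all sequences such that whenever two distinct
positions carry the symbol `1`, the distance between them lies in `P`. -/
def SpacingSubshift (P : Set ℕ) : Set (ℕ → Bool) :=
  {x | ∀ i j : ℕ, i < j → x i = true → x j = true → j - i ∈ P}

theorem shift_mem_spacingSubshift {P : Set ℕ} {x : ℕ → Bool}
    (hx : x ∈ SpacingSubshift P) : (fun n => x (n + 1)) ∈ SpacingSubshift P := by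
  intro i j hij hi hj
  have h := hx (i + 1) (j + 1) (by omega) hi hj
  have : j + 1 - (i + 1) = j - i := by omega
  rwa [this] at h

/-- The shift map `σ_P : Σ_P → Σ_P` of the spacing shift. -/
def sigmaP (P : Set ℕ) : SpacingSubshift P → SpacingSubshift P :=
  fun x => ⟨fun n => x.1 (n + 1), shift_mem_spacingSubshift x.2⟩

/-- The cylinder `[1]_P` of points of `Σ_P` whose 0th coordinate is `1`. -/
def oneCyl (P : Set ℕ) : Set (SpacingSubshift P) := {x | x.1 0 = true}

/-- A set `P ⊆ ℕ` is thick if it contains arbitrarily long intervals of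
consecutive integers. -/
def Thick (P : Set ℕ) : Prop :=
  ∀ n : ℕ, ∃ k : ℕ, Set.Ico k (k + n) ⊆ P

/-- `P(m) = ⋃_{k ≥ 1} {m^{2k-1}, …, m^{2k} - 1}`. -/
def ProgressionSet (m : ℕ) : Set ℕ :=
  {n | ∃ k : ℕ, 1 ≤ k ∧ m ^ (2 * k - 1) ≤ n ∧ n < m ^ (2 * k)}

/- ### Auxiliary lemmas -/

lemma sigmaP_iterate_apply (P : Set ℕ) (x : SpacingSubshift P) (n k : ℕ) :
    ((sigmaP P)^[n] x).1 k = x.1 (k + n) := by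
  induction n generalizing x with
  | zero => simp
  | succ n ih =>
      rw [Function.iterate_succ_apply, ih]
      rfl

lemma continuous_sigmaP (P : Set ℕ) : Continuous (sigmaP P) := by
  apply Continuous.subtype_mk
  exact continuous_pi fun n => (continuous_apply (n + 1)).comp continuous_subtype_val

lemma prodMap_iterate {X : Type*} (f : X → X) (n : ℕ) (p : X × X) :
    (fun q : X × X => (f q.1, f q.2))^[n] p = (f^[n] p.1, f^[n] p.2) := by
  induction n generalizing p with
  | zero => simp
  | succ n ih =>
      rw [Function.iterate_succ_apply, ih]
      simp [Function.iterate_succ_apply]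

lemma pi_cylinder {x : ℕ → Bool} {W : Set (ℕ → Bool)} (hW : W ∈ nhds x) :
    ∃ N : ℕ, 0 < N ∧ ∀ y : ℕ → Bool, (∀ i < N, y i = x i) → y ∈ W := by
  rw [nhds_pi, Filter.mem_pi] at hW
  obtain ⟨I, hI, t, ht, hsub⟩ := hW
  obtain ⟨N, hN⟩ := hI.bddAbove
  refine ⟨N + 1, Nat.succ_pos N, fun y hy => hsub ?_⟩
  intro i hi
  have : y i = x i := hy i (Nat.lt_succ_of_le (hN hi))
  rw [this]
  exact mem_of_mem_nhds (ht i)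

/-- Every open set of `Σ_P` around a point contains a cylinder. -/
lemma cylinder_subset {P : Set ℕ} {U : Set (SpacingSubshift P)} (hU : IsOpen U)
    {u : SpacingSubshift P} (hu : u ∈ U) :
    ∃ N : ℕ, 0 < N ∧ ∀ y : SpacingSubshift P, (∀ i < N, y.1 i = u.1 i) → y ∈ U := by
  have hnh : U ∈ nhds u := hU.mem_nhds hu
  rw [nhds_induced] at hnh
  obtain ⟨W, hW, hWsub⟩ := hnh
  obtain ⟨N, hN, hcyl⟩ := pi_cylinder hW
  exact ⟨N, hN, fun y hy => hWsub (hcyl y.1 hy)⟩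

/-- The point of `Σ_P` with a single `1` at position `m`. -/
def onePt (P : Set ℕ) (m : ℕ) : SpacingSubshift P :=
  ⟨fun t => decide (t = m), by
    intro i j hij hi hj
    simp only [decide_eq_true_eq] at hi hj
    omega⟩

/-- The gluing: `u` on `[0,N)`, then `v` shifted to `[n, n+M)`, zero elsewhere. -/
def glue (P : Set ℕ) (u v : SpacingSubshift P) (N M n : ℕ) : ℕ → Bool :=
  fun t => if t < N then u.1 t else if n ≤ t ∧ t < n + M then v.1 (t - n) else false

lemma glue_true {P : Set ℕ} {u v : SpacingSubshift P} {N M n t : ℕ}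
    (h : glue P u v N M n t = true) :
    (t < N ∧ u.1 t = true) ∨ (n ≤ t ∧ t < n + M ∧ v.1 (t - n) = true) := by
  unfold glue at h
  split at h
  · exact Or.inl ⟨by assumption, h⟩
  · split at h
    · exact Or.inr ⟨(by assumption : n ≤ t ∧ t < n + M).1,
        (by assumption : n ≤ t ∧ t < n + M).2, h⟩
    · exact absurd h (by simp)

lemma glue_mem {P : Set ℕ} {u v : SpacingSubshift P} {N M k : ℕ}
    (hk : Set.Ico k (k + (N + M)) ⊆ P) :
    glue P u v N M (k + N) ∈ SpacingSubshift P := by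
  intro i j hij hi hj
  rcases glue_true hi with ⟨hiN, hiu⟩ | ⟨hin, hin', hiv⟩ <;>
    rcases glue_true hj with ⟨hjN, hju⟩ | ⟨hjn, hjn', hjv⟩
  · exact u.2 i j hij hiu hju
  · exact hk ⟨by omega, by omega⟩
  · omega
  · have := v.2 (i - (k + N)) (j - (k + N)) (by omega) hiv hjv
    have heq : j - (k + N) - (i - (k + N)) = j - i := by omega
    rwa [heq] at this

lemma glue_left {P : Set ℕ} {u v : SpacingSubshift P} {N M n i : ℕ} (hi : i < N) :
    glue P u v N M n i = u.1 i := if_pos hi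

lemma glue_right {P : Set ℕ} {u v : SpacingSubshift P} {N M k i : ℕ} (hi : i < M) :
    glue P u v N M (k + N) (i + (k + N)) = v.1 i := by
  unfold glue
  rw [if_neg (by omega), if_pos (by omega), Nat.add_sub_cancel]

/-- Sufficiency: thick implies weakly mixing. -/
lemma wm_of_thick {P : Set ℕ} (h : Thick P) : WeaklyMixing (sigmaP P) := by
  intro O1 O2 hO1 hO2 hne1 hne2
  obtain ⟨p, hp⟩ := hne1
  obtain ⟨q, hq⟩ := hne2
  obtain ⟨U1, U2, hU1o, hU2o, hp1, hp2, hsub1⟩ := isOpen_prod_iff.mp hO1 p.1 p.2 hp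
  obtain ⟨V1, V2, hV1o, hV2o, hq1, hq2, hsub2⟩ := isOpen_prod_iff.mp hO2 q.1 q.2 hq
  obtain ⟨N1, hN1, hc1⟩ := cylinder_subset hU1o hp1
  obtain ⟨N2, hN2, hc2⟩ := cylinder_subset hU2o hp2
  obtain ⟨M1, hM1, hd1⟩ := cylinder_subset hV1o hq1
  obtain ⟨M2, hM2, hd2⟩ := cylinder_subset hV2o hq2
  set N := max N1 N2 with hN
  set M := max M1 M2 with hM
  obtain ⟨k, hk⟩ := h (N + M)
  set n := k + N with hn
  -- the two glued points
  set x : SpacingSubshift P := ⟨glue P p.1 q.1 N M n, glue_mem hk⟩ with hx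
  set y : SpacingSubshift P := ⟨glue P p.2 q.2 N M n, glue_mem hk⟩ with hy
  have hxU : x ∈ U1 := hc1 x fun i hi => glue_left (by omega)
  have hyU : y ∈ U2 := hc2 y fun i hi => glue_left (by omega)
  have hxV : (sigmaP P)^[n] x ∈ V1 := by
    refine hd1 _ fun i hi => ?_
    rw [sigmaP_iterate_apply]
    exact glue_right (by omega)
  have hyV : (sigmaP P)^[n] y ∈ V2 := by
    refine hd2 _ fun i hi => ?_
    rw [sigmaP_iterate_apply]
    exact glue_right (by omega)
  refine ⟨n, by omega, ((sigmaP P)^[n] x, (sigmaP P)^[n] y), ⟨(x, y), hsub1 ⟨hxU, hyU⟩, ?_⟩,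
    hsub2 ⟨hxV, hyV⟩⟩
  rw [prodMap_iterate]

/-- From weak mixing: simultaneous hitting times for two pairs. -/
lemma wm_pair {X : Type*} [TopologicalSpace X] {f : X → X} (h : WeaklyMixing f)
    {U1 V1 U2 V2 : Set X} (hU1 : IsOpen U1) (hV1 : IsOpen V1) (hU2 : IsOpen U2)
    (hV2 : IsOpen V2) (hU1n : U1.Nonempty) (hV1n : V1.Nonempty) (hU2n : U2.Nonempty)
    (hV2n : V2.Nonempty) :
    ∃ n : ℕ, 0 < n ∧ (f^[n] '' U1 ∩ V1).Nonempty ∧ (f^[n] '' U2 ∩ V2).Nonempty := by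
  obtain ⟨n, hn, z, ⟨w, hw, hwz⟩, hzV⟩ :=
    h (U1 ×ˢ U2) (V1 ×ˢ V2) (hU1.prod hU2) (hV1.prod hV2) (hU1n.prod hU2n) (hV1n.prod hV2n)
  rw [prodMap_iterate] at hwz
  refine ⟨n, hn, ⟨z.1, ⟨w.1, hw.1, ?_⟩, hzV.1⟩, ⟨z.2, ⟨w.2, hw.2, ?_⟩, hzV.2⟩⟩
  · rw [← hwz]
  · rw [← hwz]

/-- Furstenberg intersection lemma for hitting-time sets. -/
lemma nset_filterbase {X : Type*} [TopologicalSpace X] {f : X → X} (hf : Continuous f)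
    (h : WeaklyMixing f) {U1 V1 U2 V2 : Set X} (hU1 : IsOpen U1) (hV1 : IsOpen V1)
    (hU2 : IsOpen U2) (hV2 : IsOpen V2) (hU1n : U1.Nonempty) (hV1n : V1.Nonempty)
    (hU2n : U2.Nonempty) (hV2n : V2.Nonempty) :
    ∃ U3 V3 : Set X, IsOpen U3 ∧ IsOpen V3 ∧ U3.Nonempty ∧ V3.Nonempty ∧
      NSet f U3 V3 ⊆ NSet f U1 V1 ∩ NSet f U2 V2 := by
  obtain ⟨n, _, ⟨a', ⟨a, ha, haa⟩, ha'⟩, ⟨b', ⟨b, hb, hbb⟩, hb'⟩⟩ :=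
    wm_pair h hU1 hU2 hV1 hV2 hU1n hU2n hV1n hV2n
  refine ⟨U1 ∩ f^[n] ⁻¹' U2, V1 ∩ f^[n] ⁻¹' V2,
    hU1.inter (hU2.preimage (hf.iterate n)), hV1.inter (hV2.preimage (hf.iterate n)),
    ⟨a, ha, by rw [Set.mem_preimage, haa]; exact ha'⟩,
    ⟨b, hb, by rw [Set.mem_preimage, hbb]; exact hb'⟩, ?_⟩
  rintro m ⟨hm, z, ⟨w, ⟨hwU1, hwU2⟩, hwz⟩, hzV1, hzV2⟩
  constructor
  · exact ⟨hm, z, ⟨w, hwU1, hwz⟩, hzV1⟩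
  · refine ⟨hm, f^[n] z, ⟨f^[n] w, hwU2, ?_⟩, hzV2⟩
    rw [← hwz, ← Function.iterate_add_apply, ← Function.iterate_add_apply, Nat.add_comm]

/-- Induction: one pair of open sets whose hitting set refines finitely many. -/
lemma nset_multi {X : Type*} [TopologicalSpace X] {f : X → X} (hf : Continuous f)
    (h : WeaklyMixing f) {U : Set X} (hUo : IsOpen U) (hUn : U.Nonempty)
    (V : ℕ → Set X) (hVo : ∀ i, IsOpen (V i)) (hVn : ∀ i, (V i).Nonempty) (L : ℕ) :
    ∃ U' V' : Set X, IsOpen U' ∧ IsOpen V' ∧ U'.Nonempty ∧ V'.Nonempty ∧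
      ∀ i < L, NSet f U' V' ⊆ NSet f U (V i) := by
  induction L with
  | zero => exact ⟨U, U, hUo, hUo, hUn, hUn, fun i hi => absurd hi (Nat.not_lt_zero i)⟩
  | succ L ih =>
      obtain ⟨U', V', hU'o, hV'o, hU'n, hV'n, hsub⟩ := ih
      obtain ⟨U'', V'', hU''o, hV''o, hU''n, hV''n, hsub'⟩ :=
        nset_filterbase hf h hU'o hV'o hUo (hVo L) hU'n hV'n hUn (hVn L)
      refine ⟨U'', V'', hU''o, hV''o, hU''n, hV''n, fun i hi m hm => ?_⟩
      rcases Nat.lt_succ_iff_lt_or_eq.mp hi with hi | rfl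
      · exact hsub i hi (hsub' hm).1
      · exact (hsub' hm).2

/-- Necessity: weak mixing implies thick. -/
lemma thick_of_wm {P : Set ℕ} (h : WeaklyMixing (sigmaP P)) : Thick P := by
  intro L
  set U : Set (SpacingSubshift P) := oneCyl P with hU
  set V : ℕ → Set (SpacingSubshift P) := fun i => {x | x.1 i = true} with hV
  have hUo : IsOpen U := by
    have : U = (fun x : SpacingSubshift P => x.1 0) ⁻¹' {true} := by
      ext x; simp [hU, oneCyl]
    rw [this]
    exact (((continuous_apply 0).comp continuous_subtype_val)).isOpen_preimage _ trivial
  have hVo : ∀ i, IsOpen (V i) := by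
    intro i
    have : V i = (fun x : SpacingSubshift P => x.1 i) ⁻¹' {true} := by
      ext x; simp [hV]
    rw [this]
    exact (((continuous_apply i).comp continuous_subtype_val)).isOpen_preimage _ trivial
  have hUn : U.Nonempty := ⟨onePt P 0, by simp [hU, oneCyl, onePt]⟩
  have hVn : ∀ i, (V i).Nonempty := fun i => ⟨onePt P i, by simp [hV, onePt]⟩
  obtain ⟨U', V', hU'o, hV'o, hU'n, hV'n, hsub⟩ :=
    nset_multi (continuous_sigmaP P) h hUo hUn V hVo hVn L
  obtain ⟨n, hn, hne⟩ := wm_pair h hU'o hV'o hU'o hV'o hU'n hV'n hU'n hV'n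
  have hnN : n ∈ NSet (sigmaP P) U' V' := ⟨hn, hne.1⟩
  refine ⟨n, fun d hd => ?_⟩
  obtain ⟨hdl, hdr⟩ := hd
  have hmem : n ∈ NSet (sigmaP P) U (V (d - n)) := hsub (d - n) (by omega) hnN
  obtain ⟨-, z, ⟨x, hxU, hxz⟩, hzV⟩ := hmem
  have hx0 : x.1 0 = true := hxU
  have hxd : x.1 d = true := by
    have : z.1 (d - n) = true := hzV
    rw [← hxz, sigmaP_iterate_apply] at this
    have heq : d - n + n = d := by omega
    rwa [heq] at this
  have := x.2 0 d (by omega) hx0 hxd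
  simpa using this

/-- For any `P ⊆ ℕ`, the spacing shift `σ_P` is weakly mixing iff `P`
is a thick set. -/
theorem statement16 (P : Set ℕ) : WeaklyMixing (sigmaP P) ↔ Thick P :=
  ⟨thick_of_wm, wm_of_thick⟩
end
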